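/- Let c > 0 and d > 0. Then lim_{M → ∞} −(1/M) · log( 1 − (1 − erfc(√(c·M/(2d))))^M ) = c/(2d). (This identifies the exponential decay rate of the second term of the first-arrival detector's error probability when the decision threshold approaches Δ at rate d/M, and it underlies the conclusion that the FA error exponent equals −log(1 − erfc(√(c/(2Δ)))).) -/

import Mathlib

open Filter

/-- The complementary error function `erfc x = (2/√π) ∫_x^∞ exp(−u²) du`. -/
noncomputable def erfc (x : ℝ) : ℝ :=
  (2 / Real.sqrt Real.pi) * ∫ u in Set.Ioi x, Real.exp (-u ^ 2)

open MeasureTheory Set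

lemma integrableOn_exp_neg_sq (s : Set ℝ) : IntegrableOn (fun u : ℝ => Real.exp (-u ^ 2)) s := by
  have := integrable_exp_neg_mul_sq (b := 1) one_pos
  simpa using this.integrableOn

lemma integral_Ioi_mul_exp (x : ℝ) :
    ∫ u in Set.Ioi x, u * Real.exp (-u ^ 2) = Real.exp (-x ^ 2) / 2 := by
  have hderiv : ∀ u ∈ Set.Ici x,
      HasDerivAt (fun u : ℝ => -Real.exp (-u ^ 2) / 2) (u * Real.exp (-u ^ 2)) u := by
    intro u _
    have h1 : HasDerivAt (fun u : ℝ => -u ^ 2) (-(2 * u)) u := by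
      simpa using (hasDerivAt_pow 2 u).fun_neg
    have h2 := (h1.exp.fun_neg).div_const 2
    refine h2.congr_deriv ?_
    ring
  have hint : IntegrableOn (fun u : ℝ => u * Real.exp (-u ^ 2)) (Set.Ioi x) := by
    have := integrable_mul_exp_neg_mul_sq (b := 1) one_pos
    simpa using this.integrableOn
  have htend : Tendsto (fun u : ℝ => -Real.exp (-u ^ 2) / 2) atTop (nhds 0) := by
    have h0 : Tendsto (fun u : ℝ => -u ^ 2) atTop atBot := by
      exact tendsto_neg_atBot_iff.mpr (tendsto_pow_atTop (α := ℝ) two_ne_zero)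
    have := (Real.tendsto_exp_atBot.comp h0).neg.div_const 2
    simpa using this
  have := integral_Ioi_of_hasDerivAt_of_tendsto' hderiv hint htend
  rw [this]; ring

lemma integral_Ioi_exp_le {x : ℝ} (hx : 0 < x) :
    ∫ u in Set.Ioi x, Real.exp (-u ^ 2) ≤ Real.exp (-x ^ 2) / (2 * x) := by
  have hmono : ∫ u in Set.Ioi x, Real.exp (-u ^ 2)
      ≤ ∫ u in Set.Ioi x, (u * Real.exp (-u ^ 2)) / x := by
    refine setIntegral_mono_on (integrableOn_exp_neg_sq _) ?_ measurableSet_Ioi ?_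
    · have h := ((integrable_mul_exp_neg_mul_sq (b := 1) one_pos).div_const x).integrableOn
        (s := Set.Ioi x)
      refine h.congr_fun (fun u _ => by simp) measurableSet_Ioi
    · intro u hu
      rw [Set.mem_Ioi] at hu
      have : 1 ≤ u / x := (one_le_div hx).mpr hu.le
      calc Real.exp (-u ^ 2) = 1 * Real.exp (-u ^ 2) := by ring
        _ ≤ (u / x) * Real.exp (-u ^ 2) := by
            exact mul_le_mul_of_nonneg_right this (Real.exp_nonneg _)
        _ = u * Real.exp (-u ^ 2) / x := by ring
  calc ∫ u in Set.Ioi x, Real.exp (-u ^ 2)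
      ≤ ∫ u in Set.Ioi x, (u * Real.exp (-u ^ 2)) / x := hmono
    _ = (∫ u in Set.Ioi x, u * Real.exp (-u ^ 2)) / x := by rw [integral_div]
    _ = (Real.exp (-x ^ 2) / 2) / x := by rw [integral_Ioi_mul_exp]
    _ = Real.exp (-x ^ 2) / (2 * x) := by ring

lemma le_integral_Ioi_exp {x : ℝ} (hx : 0 ≤ x) :
    Real.exp (-(x + 1) ^ 2) ≤ ∫ u in Set.Ioi x, Real.exp (-u ^ 2) := by
  have h1 : Real.exp (-(x + 1) ^ 2) * (volume (Set.Ioc x (x + 1))).toReal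
      ≤ ∫ u in Set.Ioc x (x + 1), Real.exp (-u ^ 2) := by
    refine setIntegral_ge_of_const_le_real measurableSet_Ioc (by simp) ?_
      (integrableOn_exp_neg_sq _)
    intro u hu
    apply Real.exp_le_exp.mpr
    simp only [neg_le_neg_iff]
    have h0u : 0 ≤ u := le_trans hx hu.1.le
    nlinarith [hu.1.le, hu.2]
  have hvol : (volume (Set.Ioc x (x + 1))).toReal = 1 := by
    rw [Real.volume_Ioc]; simp
  rw [hvol, mul_one] at h1
  refine h1.trans ?_
  refine setIntegral_mono_set (integrableOn_exp_neg_sq _) ?_ ?_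
  · exact Filter.Eventually.of_forall fun u => Real.exp_nonneg _
  · exact Filter.Eventually.of_forall fun u hu => hu.1

lemma erfc_le {x : ℝ} (hx : 0 < x) :
    erfc x ≤ Real.exp (-x ^ 2) / (Real.sqrt Real.pi * x) := by
  have hpi : 0 < Real.sqrt Real.pi := Real.sqrt_pos.mpr Real.pi_pos
  have := integral_Ioi_exp_le hx
  calc erfc x ≤ (2 / Real.sqrt Real.pi) * (Real.exp (-x ^ 2) / (2 * x)) := by
        exact mul_le_mul_of_nonneg_left this (by positivity)
    _ = Real.exp (-x ^ 2) / (Real.sqrt Real.pi * x) := by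
        field_simp

lemma le_erfc {x : ℝ} (hx : 0 ≤ x) :
    (2 / Real.sqrt Real.pi) * Real.exp (-(x + 1) ^ 2) ≤ erfc x := by
  have hpi : 0 < Real.sqrt Real.pi := Real.sqrt_pos.mpr Real.pi_pos
  exact mul_le_mul_of_nonneg_left (le_integral_Ioi_exp hx) (by positivity)

lemma key (a : ℝ) (ha : 0 < a) (M : ℕ) (hM1 : 1 ≤ M) (hM : 1 ≤ a * M) :
    a - Real.log M / M
      ≤ -(1 / (M : ℝ)) * Real.log (1 - (1 - erfc (Real.sqrt (a * M))) ^ M) ∧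
    -(1 / (M : ℝ)) * Real.log (1 - (1 - erfc (Real.sqrt (a * M))) ^ M)
      ≤ a + (2 * Real.sqrt (a * M) + 1 + Real.log (Real.sqrt Real.pi / 2)) / M := by
  have hMpos : (0 : ℝ) < M := by exact_mod_cast Nat.lt_of_lt_of_le Nat.zero_lt_one hM1
  have haM : (0 : ℝ) ≤ a * M := by positivity
  set x := Real.sqrt (a * M) with hxdef
  have hx1 : 1 ≤ x := by
    rw [hxdef, show (1:ℝ) = Real.sqrt 1 by simp]
    exact Real.sqrt_le_sqrt hM
  have hx0 : 0 < x := lt_of_lt_of_le one_pos hx1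
  have hxsq : x ^ 2 = a * M := Real.sq_sqrt haM
  have hpi1 : 1 ≤ Real.sqrt Real.pi := by
    rw [show (1:ℝ) = Real.sqrt 1 by simp]
    exact Real.sqrt_le_sqrt (le_of_lt (lt_of_lt_of_le one_lt_two Real.two_le_pi))
  set ε := erfc x with hεdef
  have hεpos : 0 < ε := by
    have h := le_erfc (x := x) hx0.le
    have : (0:ℝ) < (2 / Real.sqrt Real.pi) * Real.exp (-(x + 1) ^ 2) := by positivity
    linarith
  have hεup : ε ≤ Real.exp (-(a * M)) := by
    have h1 := erfc_le hx0
    have h2 : 1 ≤ Real.sqrt Real.pi * x := by nlinarith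
    calc ε ≤ Real.exp (-x ^ 2) / (Real.sqrt Real.pi * x) := h1
      _ ≤ Real.exp (-x ^ 2) := div_le_self (Real.exp_nonneg _) h2
      _ = Real.exp (-(a * M)) := by rw [hxsq]
  have hε1 : ε ≤ 1 := by
    refine hεup.trans ?_
    rw [Real.exp_le_one_iff]; linarith
  have hlogε_le : Real.log ε ≤ -(a * M) := by
    have := Real.log_le_log hεpos hεup
    rwa [Real.log_exp] at this
  have hlogε_ge : Real.log (2 / Real.sqrt Real.pi) - (x + 1) ^ 2 ≤ Real.log ε := by
    have h2 := le_erfc (x := x) hx0.le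
    have hl := Real.log_le_log (by positivity) h2
    rwa [Real.log_mul (by positivity) (Real.exp_ne_zero _), Real.log_exp,
      ← sub_eq_add_neg] at hl
  have hlog2 : Real.log (2 / Real.sqrt Real.pi) = -Real.log (Real.sqrt Real.pi / 2) := by
    rw [← Real.log_inv]
    congr 1
    rw [inv_div]
  -- bounds on T
  have hber : 1 - (1 - ε) ^ M ≤ M * ε := by
    have h := one_add_mul_le_pow (show (-2:ℝ) ≤ -ε by linarith) M
    rw [mul_neg, ← sub_eq_add_neg, ← sub_eq_add_neg] at h
    linarith
  have hεleT : ε ≤ 1 - (1 - ε) ^ M := by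
    have hp : (1 - ε) ^ M ≤ (1 - ε) ^ 1 :=
      pow_le_pow_of_le_one (by linarith) (by linarith) hM1
    rw [pow_one] at hp
    linarith
  set T := 1 - (1 - ε) ^ M with hTdef
  have hTpos : 0 < T := lt_of_lt_of_le hεpos hεleT
  have hlogT_le : Real.log T ≤ Real.log M + Real.log ε := by
    calc Real.log T ≤ Real.log ((M : ℝ) * ε) := Real.log_le_log hTpos hber
      _ = Real.log M + Real.log ε := Real.log_mul (ne_of_gt hMpos) (ne_of_gt hεpos)
  have hlogT_ge : Real.log ε ≤ Real.log T := Real.log_le_log hεpos hεleT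
  constructor
  · have h1 : Real.log T ≤ Real.log M - a * M := by linarith
    have h2 : (a * M - Real.log M) / M ≤ -Real.log T / M := by
      apply div_le_div_of_nonneg_right ?_ hMpos.le |>.trans_eq rfl
      linarith
    calc a - Real.log M / M = (a * M - Real.log M) / M := by field_simp
      _ ≤ -Real.log T / M := h2
      _ = -(1 / (M:ℝ)) * Real.log T := by ring
  · have h1 : -Real.log T ≤ a * M + 2 * x + 1 + Real.log (Real.sqrt Real.pi / 2) := by
      have : -(Real.log ε) ≤ (x + 1) ^ 2 - Real.log (2 / Real.sqrt Real.pi) := by linarith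
      rw [hlog2] at this
      nlinarith
    have h2 : -Real.log T / M ≤ (a * M + 2 * x + 1 + Real.log (Real.sqrt Real.pi / 2)) / M :=
      div_le_div_of_nonneg_right ?_ hMpos.le
    · calc -(1 / (M:ℝ)) * Real.log T = -Real.log T / M := by ring
        _ ≤ (a * M + 2 * x + 1 + Real.log (Real.sqrt Real.pi / 2)) / M := h2
        _ = a + (2 * x + 1 + Real.log (Real.sqrt Real.pi / 2)) / M := by field_simp; ring
    · exact h1

/-- Exponential decay rate of the second term of the FA detector's error
probability when the threshold approaches `Δ` at rate `d/M`:
`−(1/M)·log(1 − (1 − erfc(√(cM/(2d))))^M) → c/(2d)` as `M → ∞`. -/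
theorem FA_second_term_rate (c d : ℝ) (hc : 0 < c) (hd : 0 < d) :
    Tendsto (fun M : ℕ =>
        -(1 / (M : ℝ)) * Real.log (1 - (1 - erfc (Real.sqrt (c * M / (2 * d)))) ^ M))
      atTop (nhds (c / (2 * d))) := by
  set a := c / (2 * d) with ha_def
  have ha : 0 < a := by positivity
  have harg : ∀ M : ℕ, c * (M : ℝ) / (2 * d) = a * M := fun M => by
    rw [ha_def]; ring
  -- lower sequence tends to a
  have hlog0 : Tendsto (fun M : ℕ => Real.log M / (M : ℝ)) atTop (nhds 0) := by
    have h := Real.isLittleO_log_id_atTop.tendsto_div_nhds_zero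
    exact h.comp tendsto_natCast_atTop_atTop
  have hL : Tendsto (fun M : ℕ => a - Real.log M / M) atTop (nhds a) := by
    simpa using tendsto_const_nhds.sub hlog0
  -- upper sequence tends to a
  have hsqrtTop : Tendsto (fun M : ℕ => Real.sqrt M) atTop atTop := by
    have h := (tendsto_rpow_atTop (y := (1:ℝ)/2) (by norm_num)).comp
      (tendsto_natCast_atTop_atTop (R := ℝ))
    exact h.congr fun M => (Real.sqrt_eq_rpow _).symm
  have hterm : Tendsto
      (fun M : ℕ => (2 * Real.sqrt (a * M) + 1 + Real.log (Real.sqrt Real.pi / 2)) / M)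
      atTop (nhds 0) := by
    have h1 : Tendsto (fun M : ℕ => 2 * Real.sqrt a / Real.sqrt M) atTop (nhds 0) :=
      Tendsto.div_atTop tendsto_const_nhds hsqrtTop
    have h2 : Tendsto (fun M : ℕ =>
        (1 + Real.log (Real.sqrt Real.pi / 2)) / (M : ℝ)) atTop (nhds 0) :=
      tendsto_const_div_atTop_nhds_zero_nat _
    have h3 := h1.add h2
    rw [add_zero] at h3
    refine h3.congr' ?_
    filter_upwards [eventually_ge_atTop 1] with M hM1
    have hMpos : (0 : ℝ) < M := by exact_mod_cast hM1
    have hs : (0 : ℝ) < Real.sqrt M := Real.sqrt_pos.mpr hMpos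
    have hms : Real.sqrt M * Real.sqrt M = (M : ℝ) := Real.mul_self_sqrt hMpos.le
    rw [Real.sqrt_mul ha.le]
    rw [← hms]
    field_simp
    have hsq : Real.sqrt (M:ℝ) ^ 2 = M := by rw [sq]; exact hms
    simp only [hsq]
    linear_combination (-2 * Real.sqrt a) * hsq
  have hU : Tendsto (fun M : ℕ =>
      a + (2 * Real.sqrt (a * M) + 1 + Real.log (Real.sqrt Real.pi / 2)) / M)
      atTop (nhds a) := by
    simpa using tendsto_const_nhds.add hterm
  refine tendsto_of_tendsto_of_tendsto_of_le_of_le' hL hU ?_ ?_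
  · filter_upwards [eventually_ge_atTop 1,
      (tendsto_natCast_atTop_atTop (R := ℝ)).const_mul_atTop ha |>.eventually_ge_atTop 1]
      with M hM1 hM2
    rw [harg M]
    exact (key a ha M hM1 hM2).1
  · filter_upwards [eventually_ge_atTop 1,
      (tendsto_natCast_atTop_atTop (R := ℝ)).const_mul_atTop ha |>.eventually_ge_atTop 1]
      with M hM1 hM2
    rw [harg M]
    exact (key a ha M hM1 hM2).2
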